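/- Let y: [ε, T] → [0,∞) be absolutely continuous and g ∈ L¹(ε,T) nonnegative with y'(t) + h(t) ≤ g(t) y(t) a.e., where h ≥ 0 is integrable. Then for all t ∈ [ε,T]: (t-ε) y(t) + ∫_ε^t (τ-ε) h(τ) dτ ≤ exp((t-ε) + ∫_ε^t g(τ)dτ) · ∫_ε^t y(τ) dτ. -/

import Mathlib

open MeasureTheory

lemma cont_ident {f : ℝ → ℝ} (hf : Continuous f) (a b : ℝ) :
    (∫ τ in a..b, (∫ s in a..τ, f s)) = ∫ s in a..b, (b - s) * f s := by
  set P : ℝ → ℝ := fun t => ∫ s in a..t, f s with hPdef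
  have hPd : ∀ t, HasDerivAt P (f t) t := fun t =>
    intervalIntegral.integral_hasDerivAt_right (hf.intervalIntegrable a t)
      (hf.stronglyMeasurableAtFilter _ _) hf.continuousAt
  have hPc : Continuous P := continuous_iff_continuousAt.2 fun t => (hPd t).continuousAt
  set Q : ℝ → ℝ := fun t => ∫ s in a..t, s * f s with hQdef
  have hidf : Continuous fun s : ℝ => s * f s := continuous_id.mul hf
  have hQd : ∀ t, HasDerivAt Q (t * f t) t := fun t =>
    intervalIntegral.integral_hasDerivAt_right (hidf.intervalIntegrable a t)
      (hidf.stronglyMeasurableAtFilter _ _) hidf.continuousAt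
  set B : ℝ → ℝ := fun t => ∫ τ in a..t, P τ with hBdef
  have hBd : ∀ t, HasDerivAt B (P t) t := fun t =>
    intervalIntegral.integral_hasDerivAt_right (hPc.intervalIntegrable a t)
      (hPc.stronglyMeasurableAtFilter _ _) hPc.continuousAt
  set L : ℝ → ℝ := fun t => B t - (t * P t - Q t) with hLdef
  have hLd : ∀ t, HasDerivAt L 0 t := by
    intro t
    have h1 : HasDerivAt L (P t - ((1 * P t + t * f t) - t * f t)) t :=
      (hBd t).sub (((hasDerivAt_id t).mul (hPd t)).sub (hQd t))
    have : P t - ((1 * P t + t * f t) - t * f t) = 0 := by ring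
    rwa [this] at h1
  have hconst : L b = L a :=
    is_const_of_deriv_eq_zero (fun t => (hLd t).differentiableAt) (fun t => (hLd t).deriv) b a
  have hLa : L a = 0 := by simp [hLdef, hBdef, hPdef, hQdef]
  have hBb : B b = b * P b - Q b := by
    have := hconst; rw [hLa] at this
    have : B b - (b * P b - Q b) = 0 := this
    linarith
  have hRHS : (∫ s in a..b, (b - s) * f s) = b * P b - Q b := by
    have h : ∀ s : ℝ, (b - s) * f s = b * f s - s * f s := fun s => by ring
    simp_rw [h]
    rw [intervalIntegral.integral_sub ((hf.intervalIntegrable a b).const_mul b)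
      (hidf.intervalIntegrable a b), intervalIntegral.integral_const_mul]
  rw [hRHS, ← hBb]

lemma gronwall_aux {a b : ℝ} (hab : a ≤ b) {z gh : ℝ → ℝ} (A : ℝ)
    (hz : Continuous z) (hg : Continuous gh) (hg0 : ∀ x, 0 ≤ gh x)
    (hyp : ∀ t ∈ Set.Icc a b, z t ≤ A + ∫ s in a..t, gh s * z s) :
    z b ≤ A * Real.exp (∫ s in a..b, gh s) := by
  set W : ℝ → ℝ := fun t => A + ∫ s in a..t, gh s * z s with hWdef
  set G : ℝ → ℝ := fun t => ∫ s in a..t, gh s with hGdef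
  have hgz : Continuous fun s => gh s * z s := hg.mul hz
  have hWd : ∀ t, HasDerivAt W (gh t * z t) t := fun t =>
    (intervalIntegral.integral_hasDerivAt_right (hgz.intervalIntegrable a t)
      (hgz.stronglyMeasurableAtFilter _ _) hgz.continuousAt).const_add A
  have hGd : ∀ t, HasDerivAt G (gh t) t := fun t =>
    intervalIntegral.integral_hasDerivAt_right (hg.intervalIntegrable a t)
      (hg.stronglyMeasurableAtFilter _ _) hg.continuousAt
  set Φ : ℝ → ℝ := fun t => W t * Real.exp (-G t) with hΦdef
  have hΦd : ∀ t, HasDerivAt Φ (gh t * z t * Real.exp (-G t) +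
      W t * (Real.exp (-G t) * -gh t)) t := fun t =>
    (hWd t).mul ((hGd t).neg.exp)
  have hΦanti : AntitoneOn Φ (Set.Icc a b) := by
    apply antitoneOn_of_deriv_nonpos (convex_Icc a b)
      (continuous_iff_continuousAt.2 fun t => (hΦd t).continuousAt).continuousOn
      (fun t _ => (hΦd t).differentiableAt.differentiableWithinAt)
    intro t ht
    rw [interior_Icc] at ht
    rw [(hΦd t).deriv]
    have hzW : z t ≤ W t := hyp t (Set.mem_Icc_of_Ioo ht)
    have : gh t * z t * Real.exp (-G t) + W t * (Real.exp (-G t) * -gh t)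
        = gh t * (z t - W t) * Real.exp (-G t) := by ring
    rw [this]
    apply mul_nonpos_of_nonpos_of_nonneg _ (Real.exp_nonneg _)
    exact mul_nonpos_of_nonneg_of_nonpos (hg0 t) (by linarith)
  have hba : Φ b ≤ Φ a := hΦanti (Set.left_mem_Icc.2 hab) (Set.right_mem_Icc.2 hab) hab
  have hΦa : Φ a = A := by simp [hΦdef, hWdef, hGdef]
  rw [hΦa] at hba
  have hWb : W b ≤ A * Real.exp (G b) := by
    have hpos : (0:ℝ) < Real.exp (-G b) := Real.exp_pos _
    have := mul_le_mul_of_nonneg_right hba (Real.exp_nonneg (G b))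
    rw [mul_assoc, ← Real.exp_add] at this
    simpa using this
  exact le_trans (hyp b (Set.right_mem_Icc.2 hab)) hWb

lemma ident {a b : ℝ} (hab : a ≤ b) {f : ℝ → ℝ} (hf : IntervalIntegrable f volume a b) :
    (∫ τ in a..b, (∫ s in a..τ, f s)) = ∫ s in a..b, (b - s) * f s := by
  set F : ℝ → ℝ := (Set.Ioc a b).indicator f with hFdef
  have hfIoc : IntegrableOn f (Set.Ioc a b) volume :=
    (intervalIntegrable_iff_integrableOn_Ioc_of_le hab).mp hf
  have hFint : Integrable F volume := hfIoc.integrable_indicator measurableSet_Ioc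
  have hprim : ∀ τ ∈ Set.Icc a b, (∫ s in a..τ, f s) = ∫ s in a..τ, F s := by
    intro τ hτ
    rw [intervalIntegral.integral_of_le hτ.1, intervalIntegral.integral_of_le hτ.1, hFdef,
      setIntegral_indicator measurableSet_Ioc, Set.Ioc_inter_Ioc]
    simp [hτ.2]
  have hFprim_cont : Continuous fun t => ∫ s in a..t, F s := hFint.continuous_primitive a
  have hL : (∫ τ in a..b, (∫ s in a..τ, f s)) = ∫ τ in a..b, (∫ s in a..τ, F s) := by
    rw [intervalIntegral.integral_of_le hab, intervalIntegral.integral_of_le hab]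
    exact setIntegral_congr_fun measurableSet_Ioc fun τ hτ =>
      hprim τ ⟨le_of_lt hτ.1, hτ.2⟩
  have hR : (∫ s in a..b, (b - s) * f s) = ∫ s in a..b, (b - s) * F s := by
    rw [intervalIntegral.integral_of_le hab, intervalIntegral.integral_of_le hab]
    exact setIntegral_congr_fun measurableSet_Ioc fun s hs => by
      simp [hFdef, Set.indicator_of_mem hs]
  rw [hL, hR]
  apply eq_of_forall_dist_le
  intro δ hδ
  set c : ℝ := 2 * (b - a) + 1 with hc
  have hba0 : (0:ℝ) ≤ b - a := by linarith
  have hcpos : 0 < c := by simp only [hc]; linarith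
  have hηpos : 0 < δ / c := div_pos hδ hcpos
  obtain ⟨fc, -, hclose, hfc, hfcint⟩ :=
    hFint.exists_hasCompactSupport_integral_sub_le hηpos
  set η := δ / c with hη
  have habs : ∀ τ, a ≤ τ → (∫ s in a..τ, |F s - fc s|) ≤ η := by
    intro τ haτ
    rw [intervalIntegral.integral_of_le haτ]
    refine le_trans (setIntegral_le_integral ((hFint.sub hfcint).abs)
      (Filter.Eventually.of_forall fun x => abs_nonneg _)) ?_
    simpa [Real.norm_eq_abs] using hclose
  have d1 : ∀ τ ∈ Set.Icc a b, |(∫ s in a..τ, F s) - ∫ s in a..τ, fc s| ≤ η := by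
    intro τ hτ
    rw [← intervalIntegral.integral_sub (hFint.intervalIntegrable)
      (hfc.intervalIntegrable a τ)]
    exact le_trans (intervalIntegral.abs_integral_le_integral_abs hτ.1) (habs τ hτ.1)
  have hprimsub : Continuous fun τ => (∫ s in a..τ, F s) - ∫ s in a..τ, fc s :=
    hFprim_cont.sub (hfcint.continuous_primitive a)
  have dB : |(∫ τ in a..b, (∫ s in a..τ, F s)) - ∫ τ in a..b, (∫ s in a..τ, fc s)|
      ≤ (b - a) * η := by
    rw [← intervalIntegral.integral_sub (hFprim_cont.intervalIntegrable a b)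
      ((hfcint.continuous_primitive a).intervalIntegrable a b)]
    refine le_trans (intervalIntegral.abs_integral_le_integral_abs hab) ?_
    have h2 : (∫ τ in a..b, |(∫ s in a..τ, F s) - ∫ s in a..τ, fc s|) ≤ ∫ _ in a..b, η :=
      intervalIntegral.integral_mono_on hab (hprimsub.abs.intervalIntegrable a b)
        intervalIntegrable_const (fun τ hτ => d1 τ hτ)
    refine le_trans h2 ?_
    rw [intervalIntegral.integral_const, smul_eq_mul]
  have hFfcI : IntervalIntegrable (fun s => F s - fc s) volume a b :=
    (hFint.sub hfcint).intervalIntegrable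
  have hbsF : IntervalIntegrable (fun s => (b - s) * F s) volume a b :=
    IntervalIntegrable.continuousOn_mul hFint.intervalIntegrable
      ((continuous_const.sub continuous_id).continuousOn)
  have hbsfc : IntervalIntegrable (fun s => (b - s) * fc s) volume a b :=
    IntervalIntegrable.continuousOn_mul (hfc.intervalIntegrable a b)
      ((continuous_const.sub continuous_id).continuousOn)
  have dR : |(∫ s in a..b, (b - s) * F s) - ∫ s in a..b, (b - s) * fc s| ≤ (b - a) * η := by
    rw [← intervalIntegral.integral_sub hbsF hbsfc]
    refine le_trans (intervalIntegral.abs_integral_le_integral_abs hab) ?_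
    have heq : ∀ s : ℝ, (b - s) * F s - (b - s) * fc s = (b - s) * (F s - fc s) :=
      fun s => by ring
    simp_rw [heq]
    have hmono : (∫ s in a..b, |(b - s) * (F s - fc s)|)
        ≤ ∫ s in a..b, (b - a) * |F s - fc s| := by
      apply intervalIntegral.integral_mono_on hab
        ((IntervalIntegrable.continuousOn_mul hFfcI
          ((continuous_const.sub continuous_id).continuousOn)).abs)
        ((hFfcI.abs).const_mul (b - a))
      intro s hs
      rw [abs_mul]
      apply mul_le_mul_of_nonneg_right _ (abs_nonneg _)
      simp only [Pi.sub_apply, id_eq]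
      rw [abs_of_nonneg (by linarith [hs.2] : (0:ℝ) ≤ b - s)]
      linarith [hs.1]
    refine le_trans hmono ?_
    rw [intervalIntegral.integral_const_mul]
    exact mul_le_mul_of_nonneg_left (habs b hab) hba0
  have dC : (∫ τ in a..b, (∫ s in a..τ, fc s)) = ∫ s in a..b, (b - s) * fc s :=
    cont_ident hfc a b
  rw [Real.dist_eq]
  calc |(∫ τ in a..b, (∫ s in a..τ, F s)) - ∫ s in a..b, (b - s) * F s|
      ≤ |(∫ τ in a..b, (∫ s in a..τ, F s)) - ∫ τ in a..b, (∫ s in a..τ, fc s)|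
        + |(∫ s in a..b, (b - s) * fc s) - ∫ s in a..b, (b - s) * F s| := by
        rw [← dC]
        exact abs_sub_le _ _ _
    _ ≤ (b - a) * η + (b - a) * η := add_le_add dB (by rw [abs_sub_comm]; exact dR)
    _ ≤ δ := by
        have h3 : 2 * (b - a) * η ≤ c * η :=
          mul_le_mul_of_nonneg_right (by simp only [hc]; linarith) (le_of_lt hηpos)
        have hcη : c * η = δ := by
          rw [hη, mul_div_assoc', mul_comm, mul_div_assoc, div_self hcpos.ne', mul_one]
        linarith

/-- Weighted Gronwall lemma: if `y : [ε,T] → [0,∞)` is absolutely continuous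
(with a.e. derivative `y'`), `h, g ≥ 0` integrable, and `y' + h ≤ g y` a.e.,
then `(t-ε) y(t) + ∫_ε^t (τ-ε) h(τ) dτ ≤ exp((t-ε) + ∫_ε^t g) ∫_ε^t y`. -/
theorem stmt_4 (ε T : ℝ) (hεT : ε < T) (y y' h g : ℝ → ℝ)
    (hy0 : ∀ t ∈ Set.Icc ε T, 0 ≤ y t)
    (hy'int : IntervalIntegrable y' volume ε T)
    (hyint : IntervalIntegrable y volume ε T)
    (hhint : IntervalIntegrable h volume ε T)
    (hh0 : ∀ t ∈ Set.Icc ε T, 0 ≤ h t)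
    (hgint : IntervalIntegrable g volume ε T)
    (hg0 : ∀ t ∈ Set.Icc ε T, 0 ≤ g t)
    (hFTC : ∀ t ∈ Set.Icc ε T, y t = y ε + ∫ s in ε..t, y' s)
    (hineq : ∀ᵐ t ∂(volume : Measure ℝ), t ∈ Set.Ioc ε T → y' t + h t ≤ g t * y t) :
    ∀ t ∈ Set.Icc ε T,
      (t - ε) * y t + ∫ τ in ε..t, (τ - ε) * h τ ≤
        Real.exp ((t - ε) + ∫ τ in ε..t, g τ) * ∫ τ in ε..t, y τ := by
  have hεT' : ε ≤ T := hεT.le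
  have subI : ∀ t ∈ Set.Icc ε T, Set.uIcc ε t ⊆ Set.uIcc ε T := by
    intro t ht
    rw [Set.uIcc_of_le ht.1, Set.uIcc_of_le hεT']
    exact Set.Icc_subset_Icc le_rfl ht.2
  have primCont : ∀ {f : ℝ → ℝ}, IntervalIntegrable f volume ε T →
      ContinuousOn (fun t => ∫ s in ε..t, f s) (Set.Icc ε T) := by
    intro f hf
    have h1 := intervalIntegral.continuousOn_primitive_interval' hf
      (a := ε) (by rw [Set.uIcc_of_le hεT']; exact Set.left_mem_Icc.2 hεT')
    rwa [Set.uIcc_of_le hεT'] at h1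
  -- continuous version of y
  set Y : ℝ → ℝ := fun t => y ε + ∫ s in ε..t, y' s with hYdef
  have hYcont : ContinuousOn Y (Set.Icc ε T) := continuousOn_const.add (primCont hy'int)
  have hyY : Set.EqOn y Y (Set.Icc ε T) := fun t ht => hFTC t ht
  have hycont : ContinuousOn y (Set.Icc ε T) := hYcont.congr hyY
  -- the weighted h-primitive
  have hHint : IntervalIntegrable (fun τ => (τ - ε) * h τ) volume ε T :=
    IntervalIntegrable.continuousOn_mul hhint
      ((continuous_id.sub continuous_const).continuousOn)
  set H : ℝ → ℝ := fun t => ∫ τ in ε..t, (τ - ε) * h τ with hHdef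
  have hHcont : ContinuousOn H (Set.Icc ε T) := primCont hHint
  have hH0 : ∀ t ∈ Set.Icc ε T, 0 ≤ H t := by
    intro t ht
    apply intervalIntegral.integral_nonneg ht.1
    intro u hu
    exact mul_nonneg (by linarith [hu.1]) (hh0 u ⟨hu.1, le_trans hu.2 ht.2⟩)
  set Z : ℝ → ℝ := fun t => (t - ε) * Y t + H t with hZdef
  have hZcont : ContinuousOn Z (Set.Icc ε T) :=
    (((continuous_id.sub continuous_const).continuousOn).mul hYcont).add hHcont
  have hZeq : ∀ t ∈ Set.Icc ε T, Z t = (t - ε) * y t + H t := by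
    intro t ht
    simp only [hZdef, hyY ht]
  -- Step A : the integration-by-parts identity
  have stepA : ∀ t ∈ Set.Icc ε T,
      (t - ε) * y t = (∫ τ in ε..t, y τ) + ∫ s in ε..t, (s - ε) * y' s := by
    intro t ht
    have hy't : IntervalIntegrable y' volume ε t := hy'int.mono_set (subI t ht)
    have hid := ident ht.1 hy't
    have hPI : IntervalIntegrable (fun τ => ∫ s in ε..τ, y' s) volume ε t := by
      apply ContinuousOn.intervalIntegrable
      rw [Set.uIcc_of_le ht.1]
      exact (primCont hy'int).mono (Set.Icc_subset_Icc le_rfl ht.2)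
    have hyI : (∫ τ in ε..t, y τ) = (t - ε) * y ε + ∫ s in ε..t, (t - s) * y' s := by
      have h1 : (∫ τ in ε..t, y τ) = ∫ τ in ε..t, (y ε + ∫ s in ε..τ, y' s) := by
        rw [intervalIntegral.integral_of_le ht.1, intervalIntegral.integral_of_le ht.1]
        exact setIntegral_congr_fun measurableSet_Ioc fun τ hτ =>
          hFTC τ ⟨le_of_lt hτ.1, le_trans hτ.2 ht.2⟩
      rw [h1, intervalIntegral.integral_add intervalIntegrable_const hPI,
        intervalIntegral.integral_const, hid]
      simp [smul_eq_mul]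
    have hyt : (t - ε) * y t = (t - ε) * y ε + ∫ s in ε..t, (t - ε) * y' s := by
      rw [hFTC t ht, mul_add, intervalIntegral.integral_const_mul]
    have h2 : IntervalIntegrable (fun s => (t - s) * y' s) volume ε t :=
      IntervalIntegrable.continuousOn_mul hy't
        ((continuous_const.sub continuous_id).continuousOn)
    have h3 : IntervalIntegrable (fun s => (s - ε) * y' s) volume ε t :=
      IntervalIntegrable.continuousOn_mul hy't
        ((continuous_id.sub continuous_const).continuousOn)
    have hsplit : (∫ s in ε..t, (t - ε) * y' s)
        = (∫ s in ε..t, (t - s) * y' s) + ∫ s in ε..t, (s - ε) * y' s := by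
      rw [← intervalIntegral.integral_add h2 h3]
      apply intervalIntegral.integral_congr
      intro s _
      ring
    rw [hyt, hyI, hsplit]
    ring
  -- Step B : integral inequality for Z
  have stepB : ∀ t ∈ Set.Icc ε T,
      Z t ≤ (∫ τ in ε..t, y τ) + ∫ s in ε..t, g s * Z s := by
    intro t ht
    have hy't : IntervalIntegrable y' volume ε t := hy'int.mono_set (subI t ht)
    have hht : IntervalIntegrable h volume ε t := hhint.mono_set (subI t ht)
    have hgt : IntervalIntegrable g volume ε t := hgint.mono_set (subI t ht)
    have hIccsub : Set.Icc ε t ⊆ Set.Icc ε T := Set.Icc_subset_Icc le_rfl ht.2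
    have huIcc : Set.uIcc ε t = Set.Icc ε t := Set.uIcc_of_le ht.1
    have hsy' : IntervalIntegrable (fun s => (s - ε) * y' s) volume ε t :=
      IntervalIntegrable.continuousOn_mul hy't
        ((continuous_id.sub continuous_const).continuousOn)
    have hsh : IntervalIntegrable (fun s => (s - ε) * h s) volume ε t :=
      IntervalIntegrable.continuousOn_mul hht
        ((continuous_id.sub continuous_const).continuousOn)
    have hgy : IntervalIntegrable (fun s => g s * y s) volume ε t :=
      IntervalIntegrable.mul_continuousOn hgt (by rw [huIcc]; exact hycont.mono hIccsub)
    have hsgy : IntervalIntegrable (fun s => (s - ε) * (g s * y s)) volume ε t :=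
      IntervalIntegrable.continuousOn_mul hgy
        ((continuous_id.sub continuous_const).continuousOn)
    have hgZ : IntervalIntegrable (fun s => g s * Z s) volume ε t :=
      IntervalIntegrable.mul_continuousOn hgt (by rw [huIcc]; exact hZcont.mono hIccsub)
    have hZt : Z t = (∫ τ in ε..t, y τ)
        + ∫ s in ε..t, ((s - ε) * y' s + (s - ε) * h s) := by
      rw [hZeq t ht, stepA t ht, intervalIntegral.integral_add hsy' hsh]
      simp only [hHdef]
      ring
    have hmono1 : (∫ s in ε..t, ((s - ε) * y' s + (s - ε) * h s))
        ≤ ∫ s in ε..t, (s - ε) * (g s * y s) := by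
      rw [intervalIntegral.integral_of_le ht.1, intervalIntegral.integral_of_le ht.1]
      apply setIntegral_mono_on_ae
        ((intervalIntegrable_iff_integrableOn_Ioc_of_le ht.1).mp (hsy'.add hsh))
        ((intervalIntegrable_iff_integrableOn_Ioc_of_le ht.1).mp hsgy)
        measurableSet_Ioc
      filter_upwards [hineq] with s hs hmem
      have h1 : s ∈ Set.Ioc ε T := ⟨hmem.1, le_trans hmem.2 ht.2⟩
      have h2 := hs h1
      have h3 : (0:ℝ) ≤ s - ε := by linarith [hmem.1.le]
      calc (s - ε) * y' s + (s - ε) * h s = (s - ε) * (y' s + h s) := by ring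
        _ ≤ (s - ε) * (g s * y s) := mul_le_mul_of_nonneg_left h2 h3
    have hmono2 : (∫ s in ε..t, (s - ε) * (g s * y s)) ≤ ∫ s in ε..t, g s * Z s := by
      rw [intervalIntegral.integral_of_le ht.1, intervalIntegral.integral_of_le ht.1]
      apply setIntegral_mono_on
        ((intervalIntegrable_iff_integrableOn_Ioc_of_le ht.1).mp hsgy)
        ((intervalIntegrable_iff_integrableOn_Ioc_of_le ht.1).mp hgZ)
        measurableSet_Ioc
      intro s hs
      have hsI : s ∈ Set.Icc ε T := ⟨hs.1.le, le_trans hs.2 ht.2⟩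
      have hrw : (s - ε) * (g s * y s) = g s * ((s - ε) * y s) := by ring
      rw [hrw]
      apply mul_le_mul_of_nonneg_left _ (hg0 s hsI)
      rw [hZeq s hsI]
      have := hH0 s hsI
      linarith
    linarith [hZt, hmono1, hmono2]
  -- bound on Z
  obtain ⟨M, hM⟩ := (isCompact_Icc : IsCompact (Set.Icc ε T)).exists_bound_of_continuousOn hZcont
  have hM0 : 0 ≤ M := le_trans (norm_nonneg _) (hM ε (Set.left_mem_Icc.2 hεT'))
  have hMabs : ∀ x ∈ Set.Icc ε T, |Z x| ≤ M := by
    intro x hx; rw [← Real.norm_eq_abs]; exact hM x hx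
  -- main argument for fixed t₀
  intro t₀ ht₀
  have hεt₀ : ε ≤ t₀ := ht₀.1
  have ht₀T : t₀ ≤ T := ht₀.2
  set I : ℝ := ∫ τ in ε..t₀, y τ with hIdef
  set G : ℝ := ∫ τ in ε..t₀, g τ with hGdef
  have hI0 : 0 ≤ I := by
    apply intervalIntegral.integral_nonneg hεt₀
    intro u hu
    exact hy0 u ⟨hu.1, le_trans hu.2 ht₀T⟩
  have hImono : ∀ τ ∈ Set.Icc ε t₀, (∫ s in ε..τ, y s) ≤ I := by
    intro τ hτ
    have h1 : IntervalIntegrable y volume ε τ :=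
      hyint.mono_set (subI τ ⟨hτ.1, le_trans hτ.2 ht₀T⟩)
    have h2 : IntervalIntegrable y volume τ t₀ := by
      apply hyint.mono_set
      rw [Set.uIcc_of_le hτ.2, Set.uIcc_of_le hεT']
      exact Set.Icc_subset_Icc hτ.1 ht₀T
    have hsplit := intervalIntegral.integral_add_adjacent_intervals h1 h2
    have h3 : 0 ≤ ∫ s in τ..t₀, y s := by
      apply intervalIntegral.integral_nonneg hτ.2
      intro u hu
      exact hy0 u ⟨le_trans hτ.1 hu.1, le_trans hu.2 ht₀T⟩
    simp only [hIdef]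
    rw [← hsplit]
    linarith
  -- the indicator version of g and its properties
  set gI : ℝ → ℝ := (Set.Ioc ε T).indicator g with hgIdef
  have hgI_int : Integrable gI volume :=
    ((intervalIntegrable_iff_integrableOn_Ioc_of_le hεT').mp hgint).integrable_indicator
      measurableSet_Ioc
  -- key approximation estimate
  have key : ∀ δ : ℝ, 0 < δ → Z t₀ ≤ (I + M * δ) * Real.exp (G + δ) := by
    intro δ hδ
    obtain ⟨g0, -, hg0close, hg0cont, hg0int⟩ :=
      hgI_int.exists_hasCompactSupport_integral_sub_le hδ
    set gg : ℝ → ℝ := fun x => max (g0 x) 0 with hggdef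
    have hggcont : Continuous gg := hg0cont.max continuous_const
    have hgg0 : ∀ x, 0 ≤ gg x := fun x => le_max_right _ _
    have hptwise : ∀ x ∈ Set.Ioc ε T, |g x - gg x| ≤ |gI x - g0 x| := by
      intro x hx
      have hgx : 0 ≤ g x := hg0 x ⟨hx.1.le, hx.2⟩
      have hgIx : gI x = g x := Set.indicator_of_mem hx g
      rw [hgIx]
      rcases le_or_gt 0 (g0 x) with hb | hb
      · rw [hggdef]; simp only [max_eq_left hb]; exact le_refl _
      · rw [hggdef]; simp only [max_eq_right hb.le]
        rw [abs_of_nonneg (by linarith : (0:ℝ) ≤ g x - 0)]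
        have : g x - g0 x ≤ |g x - g0 x| := le_abs_self _
        linarith
    have dbound : ∀ τ ∈ Set.Icc ε t₀, (∫ s in Set.Ioc ε τ, |g s - gg s|) ≤ δ := by
      intro τ hτ
      have hτT : τ ∈ Set.Icc ε T := ⟨hτ.1, le_trans hτ.2 ht₀T⟩
      have h1 : IntervalIntegrable (fun x => |g x - gg x|) volume ε τ :=
        ((hgint.mono_set (subI τ hτT)).sub (hggcont.intervalIntegrable ε τ)).abs
      have h1' : IntegrableOn (fun x => |g x - gg x|) (Set.Ioc ε τ) volume :=
        (intervalIntegrable_iff_integrableOn_Ioc_of_le hτ.1).mp h1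
      have h2 : IntegrableOn (fun x => |gI x - g0 x|) (Set.Ioc ε τ) volume :=
        ((hgI_int.sub hg0int).abs).integrableOn
      calc (∫ s in Set.Ioc ε τ, |g s - gg s|)
          ≤ ∫ s in Set.Ioc ε τ, |gI s - g0 s| := by
            apply setIntegral_mono_on h1' h2 measurableSet_Ioc
            intro x hx
            exact hptwise x ⟨hx.1, le_trans hx.2 hτT.2⟩
        _ ≤ ∫ s, |gI s - g0 s| :=
            setIntegral_le_integral ((hgI_int.sub hg0int).abs)
              (Filter.Eventually.of_forall fun x => abs_nonneg _)
        _ ≤ δ := by simpa [Real.norm_eq_abs] using hg0close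
    -- the clamped version of Z
    set clamp : ℝ → ℝ := fun s => max ε (min s t₀) with hclampdef
    have hclampcont : Continuous clamp :=
      continuous_const.max (continuous_id.min continuous_const)
    have hclampmem : ∀ s, clamp s ∈ Set.Icc ε T := by
      intro s
      constructor
      · exact le_max_left _ _
      · apply max_le hεT'
        exact le_trans (min_le_right _ _) ht₀T
    have hz2cont : Continuous (Z ∘ clamp) := hZcont.comp_continuous hclampcont hclampmem
    set Zc : ℝ → ℝ := Z ∘ clamp with hZcdef
    have hZceq : ∀ s ∈ Set.Icc ε t₀, Zc s = Z s := by
      intro s hs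
      simp only [hZcdef, Function.comp_apply, hclampdef, min_eq_left hs.2, max_eq_right hs.1]
    -- hypothesis of Gronwall lemma
    have hyp : ∀ τ ∈ Set.Icc ε t₀, Zc τ ≤ (I + M * δ) + ∫ s in ε..τ, gg s * Zc s := by
      intro τ hτ
      have hτT : τ ∈ Set.Icc ε T := ⟨hτ.1, le_trans hτ.2 ht₀T⟩
      have hIccsub : Set.Icc ε τ ⊆ Set.Icc ε T := Set.Icc_subset_Icc le_rfl hτT.2
      have huIcc : Set.uIcc ε τ = Set.Icc ε τ := Set.uIcc_of_le hτ.1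
      have hgτ : IntervalIntegrable g volume ε τ := hgint.mono_set (subI τ hτT)
      have hgZτ : IntervalIntegrable (fun s => g s * Z s) volume ε τ :=
        IntervalIntegrable.mul_continuousOn hgτ (by rw [huIcc]; exact hZcont.mono hIccsub)
      have hggZτ : IntervalIntegrable (fun s => gg s * Z s) volume ε τ := by
        apply ContinuousOn.intervalIntegrable
        rw [huIcc]
        exact (hggcont.continuousOn).mul (hZcont.mono hIccsub)
      have e1 : (∫ s in ε..τ, gg s * Zc s) = ∫ s in ε..τ, gg s * Z s := by
        rw [intervalIntegral.integral_of_le hτ.1, intervalIntegral.integral_of_le hτ.1]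
        apply setIntegral_congr_fun measurableSet_Ioc
        intro s hs
        dsimp only
        rw [hZceq s ⟨hs.1.le, le_trans hs.2 hτ.2⟩]
      have hdiff : (∫ s in ε..τ, g s * Z s) ≤ (∫ s in ε..τ, gg s * Z s) + M * δ := by
        have e2 : (∫ s in ε..τ, g s * Z s) - (∫ s in ε..τ, gg s * Z s)
            = ∫ s in ε..τ, (g s - gg s) * Z s := by
          rw [← intervalIntegral.integral_sub hgZτ hggZτ]
          apply intervalIntegral.integral_congr
          intro s _
          ring
        have hsubZ : IntervalIntegrable (fun s => (g s - gg s) * Z s) volume ε τ :=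
          IntervalIntegrable.mul_continuousOn
            (hgτ.sub (hggcont.intervalIntegrable ε τ))
            (by rw [huIcc]; exact hZcont.mono hIccsub)
        have e3 : (∫ s in ε..τ, (g s - gg s) * Z s)
            ≤ ∫ s in Set.Ioc ε τ, |g s - gg s| * M := by
          rw [intervalIntegral.integral_of_le hτ.1]
          apply setIntegral_mono_on
            ((intervalIntegrable_iff_integrableOn_Ioc_of_le hτ.1).mp hsubZ)
            ((intervalIntegrable_iff_integrableOn_Ioc_of_le hτ.1).mp
              ((((hgτ.sub (hggcont.intervalIntegrable ε τ))).abs).mul_const M))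
            measurableSet_Ioc
          intro s hs
          have hsT : s ∈ Set.Icc ε T := ⟨hs.1.le, le_trans hs.2 hτT.2⟩
          calc (g s - gg s) * Z s ≤ |(g s - gg s) * Z s| := le_abs_self _
            _ = |g s - gg s| * |Z s| := abs_mul _ _
            _ ≤ |g s - gg s| * M :=
                mul_le_mul_of_nonneg_left (hMabs s hsT) (abs_nonneg _)
        have e4 : (∫ s in Set.Ioc ε τ, |g s - gg s| * M)
            = (∫ s in Set.Ioc ε τ, |g s - gg s|) * M := integral_mul_const M _
        have e5 : (∫ s in Set.Ioc ε τ, |g s - gg s|) * M ≤ δ * M :=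
          mul_le_mul_of_nonneg_right (dbound τ hτ) hM0
        have h6 := e3.trans (le_of_eq e4) |>.trans e5
        rw [← e2] at h6
        linarith [mul_comm δ M]
      have hB := stepB τ hτT
      have hIb := hImono τ hτ
      rw [hZceq τ hτ, e1]
      have : M * δ = δ * M := mul_comm _ _
      linarith
    have hgron := gronwall_aux hεt₀ (I + M * δ) hz2cont hggcont hgg0 hyp
    rw [hZceq t₀ (Set.right_mem_Icc.2 hεt₀)] at hgron
    have hggle : (∫ s in ε..t₀, gg s) ≤ G + δ := by
      have hgτ : IntervalIntegrable g volume ε t₀ := hgint.mono_set (subI t₀ ht₀)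
      have hexp : (∫ s in ε..t₀, gg s) - G = ∫ s in ε..t₀, (gg s - g s) := by
        simp only [hGdef]
        rw [← intervalIntegral.integral_sub (hggcont.intervalIntegrable ε t₀) hgτ]
      have hle : (∫ s in ε..t₀, (gg s - g s)) ≤ ∫ s in Set.Ioc ε t₀, |g s - gg s| := by
        rw [intervalIntegral.integral_of_le hεt₀]
        apply setIntegral_mono_on
          ((intervalIntegrable_iff_integrableOn_Ioc_of_le hεt₀).mp
            ((hggcont.intervalIntegrable ε t₀).sub hgτ))
          ((intervalIntegrable_iff_integrableOn_Ioc_of_le hεt₀).mp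
            ((hgτ.sub (hggcont.intervalIntegrable ε t₀)).abs))
          measurableSet_Ioc
        intro s _
        rw [abs_sub_comm]
        exact le_abs_self _
      have := (dbound t₀ (Set.right_mem_Icc.2 hεt₀))
      linarith
    calc Z t₀ ≤ (I + M * δ) * Real.exp (∫ s in ε..t₀, gg s) := hgron
      _ ≤ (I + M * δ) * Real.exp (G + δ) := by
          apply mul_le_mul_of_nonneg_left (Real.exp_le_exp.2 hggle)
          positivity
  -- pass to the limit δ → 0⁺
  have hlim : Filter.Tendsto (fun δ : ℝ => (I + M * δ) * Real.exp (G + δ))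
      (nhdsWithin 0 (Set.Ioi 0)) (nhds (I * Real.exp G)) := by
    have hcont : Continuous fun δ : ℝ => (I + M * δ) * Real.exp (G + δ) := by
      fun_prop
    have h7 := (hcont.tendsto 0).mono_left
      (nhdsWithin_le_nhds (a := (0:ℝ)) (s := Set.Ioi (0:ℝ)))
    simpa using h7
  have hZle : Z t₀ ≤ I * Real.exp G := by
    apply ge_of_tendsto hlim
    filter_upwards [self_mem_nhdsWithin] with δ hδ
    exact key δ hδ
  -- conclusion
  have hfinal : Z t₀ = (t₀ - ε) * y t₀ + ∫ τ in ε..t₀, (τ - ε) * h τ := hZeq t₀ ht₀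
  rw [← hfinal]
  calc Z t₀ ≤ I * Real.exp G := hZle
    _ = Real.exp G * I := mul_comm _ _
    _ ≤ Real.exp ((t₀ - ε) + G) * I := by
        apply mul_le_mul_of_nonneg_right _ hI0
        apply Real.exp_le_exp.2
        linarith
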